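/- Define Γ₁ := −1 + Σ_{n≥1} (1/(2n) − 1/(2n+1)), Γ₁(1;0) := Σ over pairs of integers n₀ > n₁ > 0 with n₀ and n₁ both even of (1/n₀ − 1/(n₀−1))·(1/n₁), and Γ₁(1;1) := Σ over pairs of integers n₀ > n₁ > 0 with n₀ even and n₁ odd of (1/n₀ − 1/(n₀+1))·(1/n₁); the double series converge absolutely. Then Γ₁ = −log 2 and Γ₁² + 2·Γ₁(1;1) − 2·Γ₁(1;0) = ζ(2) = π²/6. -/

import Mathlib

open scoped BigOperators

noncomputable section

/-- `Γ₁ = -1 + Σ_{n ≥ 1} (1/(2n) - 1/(2n+1))`. -/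
def Gamma1 : ℝ := -1 + ∑' n : ℕ, (1 / (2 * ((n : ℝ) + 1)) - 1 / (2 * ((n : ℝ) + 1) + 1))

/-- The summand of `Γ₁(1;0)`: over pairs `n₀ > n₁ > 0` with `n₀, n₁` both even,
`(1/n₀ - 1/(n₀-1))·(1/n₁)`. -/
def g10 (p : ℕ × ℕ) : ℝ :=
  if p.1 > p.2 ∧ p.2 > 0 ∧ 2 ∣ p.1 ∧ 2 ∣ p.2 then
    (1 / (p.1 : ℝ) - 1 / ((p.1 : ℝ) - 1)) * (1 / (p.2 : ℝ))
  else 0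

/-- The summand of `Γ₁(1;1)`: over pairs `n₀ > n₁ > 0` with `n₀` even and `n₁` odd,
`(1/n₀ - 1/(n₀+1))·(1/n₁)`. -/
def g11 (p : ℕ × ℕ) : ℝ :=
  if p.1 > p.2 ∧ p.2 > 0 ∧ 2 ∣ p.1 ∧ ¬ 2 ∣ p.2 then
    (1 / (p.1 : ℝ) - 1 / ((p.1 : ℝ) + 1)) * (1 / (p.2 : ℝ))
  else 0

/-! ### Auxiliary definitions and lemmas -/

section Aux

open scoped Topology
open Filter Finset Real

def aseq (k : ℕ) : ℝ := (-1)^k / k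
def sps (M : ℕ) : ℝ := ∑ k ∈ Finset.range M, aseq k
def Qs (M : ℕ) : ℝ := ∑ m ∈ Finset.range M, aseq m * sps m
def Es (M : ℕ) : ℝ := ∑ b ∈ Finset.range M, 1/(2*(b:ℝ)+2)
def Os (M : ℕ) : ℝ := ∑ b ∈ Finset.range (M+1), 1/(2*(b:ℝ)+1)
def Dp (p : ℕ × ℕ) : ℝ := g10 p - g11 p
def Ps (M : ℕ) : ℝ := ∑ m ∈ Finset.range M, ∑ n ∈ Finset.range m, Dp (m, n)

lemma aseq_even (b : ℕ) : aseq (2*b) = 1/(2*(b:ℝ)) := by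
  simp [aseq, pow_mul]

lemma aseq_odd (b : ℕ) : aseq (2*b+1) = -(1/(2*(b:ℝ)+1)) := by
  simp [aseq, pow_add, pow_mul]
  ring_nf

lemma sum_range_parity (f : ℕ → ℝ) (M : ℕ) :
    ∑ n ∈ Finset.range (2*M), f n
      = ∑ b ∈ Finset.range M, f (2*b) + ∑ b ∈ Finset.range M, f (2*b+1) := by
  induction M with
  | zero => simp
  | succ k ih =>
      have h2 : 2*(k+1) = (2*k+1)+1 := by ring
      rw [h2, Finset.sum_range_succ, Finset.sum_range_succ, Finset.sum_range_succ,
        Finset.sum_range_succ, ih]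
      ring

lemma sq_sum (M : ℕ) :
    sps M ^ 2 = (∑ k ∈ Finset.range M, 1/(k:ℝ)^2) + 2 * Qs M := by
  induction M with
  | zero => simp [sps, Qs]
  | succ k ih =>
      have hsq : aseq k ^ 2 = 1/(k:ℝ)^2 := by
        simp [aseq, div_pow]
        rcases Nat.even_or_odd k with h | h
        · rw [h.neg_one_pow]; norm_num
        · rw [h.neg_one_pow]; norm_num
      simp only [sps, Qs, Finset.sum_range_succ] at *
      nlinarith [ih, hsq]

lemma sps_even (M : ℕ) : sps (2*M+2) = Es M - Os M := by
  have h : 2*M+2 = 2*(M+1) := by ring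
  rw [sps, h, sum_range_parity]
  have h1 : ∑ b ∈ Finset.range (M+1), aseq (2*b) = Es M := by
    rw [Finset.sum_range_succ', show aseq (2*0) = 0 by simp [aseq], add_zero, Es]
    apply Finset.sum_congr rfl
    intro b _
    rw [aseq_even]
    push_cast
    ring_nf
  have h2 : ∑ b ∈ Finset.range (M+1), aseq (2*b+1) = -Os M := by
    rw [Os, ← Finset.sum_neg_distrib]
    exact Finset.sum_congr rfl fun b _ => aseq_odd b
  rw [h1, h2]; ring

lemma Es_harmonic (M : ℕ) : Es M = (harmonic M : ℝ)/2 := by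
  induction M with
  | zero => simp [Es]
  | succ k ih =>
      rw [Es, Finset.sum_range_succ, ← Es, ih, harmonic_succ]
      push_cast
      field_simp

lemma EsubO (M : ℕ) : Es M - Os M = (harmonic M : ℝ) - (harmonic (2*M+1) : ℝ) := by
  induction M with
  | zero => simp [Es, Os, harmonic_succ]
  | succ k ih =>
      have e1 : ((harmonic (k+1) : ℚ) : ℝ) = (harmonic k : ℝ) + 1/((k:ℝ)+1) := by
        rw [harmonic_succ]; push_cast; ring
      have e2 : ((harmonic (2*(k+1)+1) : ℚ) : ℝ)
          = (harmonic (2*k+1) : ℝ) + 1/(2*(k:ℝ)+2) + 1/(2*(k:ℝ)+3) := by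
        have h' : 2*(k+1)+1 = (2*k+1)+1+1 := by ring
        rw [h', harmonic_succ, harmonic_succ]
        push_cast; ring
      have key : 1/(2*(k:ℝ)+2) - 1/(2*((k:ℝ)+1)+1)
          = 1/((k:ℝ)+1) - 1/(2*(k:ℝ)+2) - 1/(2*(k:ℝ)+3) := by
        have p1 : (2*(k:ℝ)+2) ≠ 0 := by positivity
        have p3 : ((k:ℝ)+1) ≠ 0 := by positivity
        have p4 : (2*(k:ℝ)+3) ≠ 0 := by positivity
        have h23 : (2*((k:ℝ)+1)+1) = (2*(k:ℝ)+3) := by ring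
        rw [h23]
        field_simp
        ring
      rw [Es, Os, Finset.sum_range_succ, Finset.sum_range_succ, ← Es, ← Os, e1, e2]
      push_cast
      linarith [ih, key]

lemma tendsto_two_mul_add_one : Tendsto (fun M : ℕ => 2*M+1) atTop atTop :=
  tendsto_atTop_mono (fun n => by simp [id]; omega) tendsto_id

lemma harmonic_nonneg' (M : ℕ) : (0:ℚ) ≤ harmonic M := by
  cases M with
  | zero => simp [harmonic]
  | succ k => exact (harmonic_pos (by omega)).le

lemma hlog : Tendsto (fun M : ℕ => (harmonic (2*M+1) : ℝ) - (harmonic M : ℝ))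
    atTop (𝓝 (Real.log 2)) := by
  have t1 : Tendsto (fun M : ℕ => (harmonic (2*M+1) : ℝ) - Real.log (2*(M:ℝ)+1))
      atTop (𝓝 Real.eulerMascheroniConstant) := by
    have := Real.tendsto_harmonic_sub_log.comp tendsto_two_mul_add_one
    refine this.congr fun M => ?_
    simp only [Function.comp]
    push_cast
    ring
  have t2 : Tendsto (fun M : ℕ => (harmonic M : ℝ) - Real.log M)
      atTop (𝓝 Real.eulerMascheroniConstant) := Real.tendsto_harmonic_sub_log
  have t3 : Tendsto (fun M : ℕ => Real.log (2*(M:ℝ)+1) - Real.log M)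
      atTop (𝓝 (Real.log 2)) := by
    have h4 : Tendsto (fun M : ℕ => 2 + 1/(M:ℝ)) atTop (𝓝 2) := by
      have : Tendsto (fun n : ℕ => 1/(n:ℝ)) atTop (𝓝 0) := tendsto_one_div_atTop_nhds_zero_nat
      simpa using tendsto_const_nhds.add this
    have h5 : Tendsto (fun M : ℕ => Real.log (2 + 1/(M:ℝ))) atTop (𝓝 (Real.log 2)) :=
      ((Real.continuousAt_log (by norm_num)).tendsto.comp h4)
    refine h5.congr' ?_
    filter_upwards [eventually_ge_atTop 1] with M hM
    have hM0 : (M:ℝ) ≠ 0 := by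
      have : (1:ℝ) ≤ (M:ℝ) := by exact_mod_cast hM
      positivity
    rw [show (2 + 1/(M:ℝ)) = (2*(M:ℝ)+1)/M by field_simp, Real.log_div (by positivity) hM0]
  have h := (t1.sub t2).add t3
  rw [sub_self, zero_add] at h
  refine h.congr fun M => ?_
  ring

lemma hc : Tendsto (fun M : ℕ => (harmonic M : ℝ)/2 / (2*(M:ℝ)+1)) atTop (𝓝 0) := by
  have hloglim : Tendsto (fun M : ℕ => (1 + Real.log M)/(M:ℝ)) atTop (𝓝 0) := by
    have h1 : Tendsto (fun M : ℕ => 1/(M:ℝ)) atTop (𝓝 0) := tendsto_one_div_atTop_nhds_zero_nat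
    have h2 : Tendsto (fun x : ℝ => Real.log x / x) atTop (𝓝 0) :=
      Real.isLittleO_log_id_atTop.tendsto_div_nhds_zero
    have h3 : Tendsto (fun M : ℕ => Real.log M / (M:ℝ)) atTop (𝓝 0) :=
      h2.comp tendsto_natCast_atTop_atTop
    have h4 := h1.add h3
    rw [add_zero] at h4
    refine h4.congr fun M => ?_
    ring
  refine squeeze_zero' ?_ ?_ hloglim
  · filter_upwards with M
    have h0 : (0:ℝ) ≤ (harmonic M : ℝ) := by exact_mod_cast harmonic_nonneg' M
    positivity
  · filter_upwards [eventually_ge_atTop 1] with M hM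
    have hM1 : (1:ℝ) ≤ (M:ℝ) := by exact_mod_cast hM
    have h1 : (harmonic M : ℝ) ≤ 1 + Real.log M := harmonic_le_one_add_log M
    have h2 : (0:ℝ) ≤ Real.log M := Real.log_nonneg hM1
    have h0 : (0:ℝ) ≤ (harmonic M : ℝ) := by exact_mod_cast harmonic_nonneg' M
    rw [div_div, div_le_div_iff₀ (by positivity) (by positivity)]
    nlinarith

/-! ### Summability -/

def wmaj (n : ℕ) : ℝ := 1 / ((n:ℝ) * Real.sqrt n)

lemma wmaj_nonneg (n : ℕ) : 0 ≤ wmaj n := by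
  unfold wmaj; positivity

lemma summable_wmaj : Summable wmaj := by
  have h : Summable (fun n : ℕ => 1 / (n:ℝ) ^ (3/2 : ℝ)) :=
    Real.summable_one_div_nat_rpow.mpr (by norm_num)
  refine h.congr fun n => ?_
  unfold wmaj
  rcases Nat.eq_zero_or_pos n with rfl | hn
  · simp [Real.zero_rpow]
  · have hn0 : (0:ℝ) < n := by exact_mod_cast hn
    have key : (n:ℝ)^(3/2:ℝ) = (n:ℝ) * (n:ℝ)^(1/2:ℝ) := by
      rw [show (3/2:ℝ) = 1 + 1/2 by norm_num, Real.rpow_add hn0, Real.rpow_one]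
    rw [key, Real.sqrt_eq_rpow]

lemma summable_majorant : Summable (fun p : ℕ × ℕ => 2 * (wmaj p.1 * wmaj p.2)) :=
  (summable_wmaj.mul_of_nonneg summable_wmaj wmaj_nonneg wmaj_nonneg).mul_left 2

lemma sqrt_mul_sqrt_le {m n : ℕ} (h : n ≤ m) : Real.sqrt m * Real.sqrt n ≤ (m:ℝ) := by
  have h1 : Real.sqrt n ≤ Real.sqrt m := Real.sqrt_le_sqrt (by exact_mod_cast h)
  have h2 : Real.sqrt m * Real.sqrt m = (m:ℝ) := Real.mul_self_sqrt (by positivity)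
  nlinarith [Real.sqrt_nonneg m, Real.sqrt_nonneg n]

lemma g10_abs_le (p : ℕ × ℕ) : |g10 p| ≤ 2 * (wmaj p.1 * wmaj p.2) := by
  obtain ⟨m, n⟩ := p
  unfold g10 wmaj
  dsimp only
  split_ifs with h
  · obtain ⟨h1, h2, ⟨a, ha⟩, ⟨b, hb⟩⟩ := h
    have hn2 : 2 ≤ n := by omega
    have hm4 : 4 ≤ m := by omega
    have hmr : (4:ℝ) ≤ m := by exact_mod_cast hm4
    have hnr : (2:ℝ) ≤ n := by exact_mod_cast hn2
    have hm1 : (1:ℝ) ≤ (m:ℝ) - 1 := by linarith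
    have hval : (1 / (m : ℝ) - 1 / ((m : ℝ) - 1)) * (1 / (n : ℝ))
        = -(1 / ((m:ℝ) * ((m:ℝ) - 1) * n)) := by
      field_simp
      try ring
    rw [hval, abs_neg, abs_of_nonneg (by positivity),
      div_mul_div_comm, one_mul, mul_one_div]
    have hsq : Real.sqrt m * Real.sqrt n ≤ (m:ℝ) := sqrt_mul_sqrt_le (le_of_lt h1)
    rw [div_le_div_iff₀ (by positivity) (by positivity)]
    have hsm := Real.sqrt_nonneg m
    have hsn := Real.sqrt_nonneg n
    nlinarith [mul_le_mul_of_nonneg_left hsq (by positivity : (0:ℝ) ≤ (m:ℝ)*(n:ℝ)),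
      mul_pos (lt_of_lt_of_le (by norm_num : (0:ℝ) < 2) hnr)
        (lt_of_lt_of_le (by norm_num : (0:ℝ) < 4) hmr)]
  · rw [abs_zero]
    positivity

lemma g11_abs_le (p : ℕ × ℕ) : |g11 p| ≤ 2 * (wmaj p.1 * wmaj p.2) := by
  obtain ⟨m, n⟩ := p
  unfold g11 wmaj
  dsimp only
  split_ifs with h
  · obtain ⟨h1, h2, ⟨a, ha⟩, hodd⟩ := h
    have hn1 : 1 ≤ n := h2
    have hm2 : 2 ≤ m := by omega
    have hmr : (2:ℝ) ≤ m := by exact_mod_cast hm2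
    have hnr : (1:ℝ) ≤ n := by exact_mod_cast hn1
    have hval : (1 / (m : ℝ) - 1 / ((m : ℝ) + 1)) * (1 / (n : ℝ))
        = 1 / ((m:ℝ) * ((m:ℝ) + 1) * n) := by
      field_simp
      try ring
    rw [hval, abs_of_nonneg (by positivity),
      div_mul_div_comm, one_mul, mul_one_div]
    have hsq : Real.sqrt m * Real.sqrt n ≤ (m:ℝ) := sqrt_mul_sqrt_le (le_of_lt h1)
    rw [div_le_div_iff₀ (by positivity) (by positivity)]
    have hsm := Real.sqrt_nonneg m
    have hsn := Real.sqrt_nonneg n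
    nlinarith [mul_le_mul_of_nonneg_left hsq (by positivity : (0:ℝ) ≤ (m:ℝ)*(n:ℝ)),
      mul_pos (lt_of_lt_of_le (by norm_num : (0:ℝ) < 1) hnr)
        (lt_of_lt_of_le (by norm_num : (0:ℝ) < 2) hmr)]
  · rw [abs_zero]
    positivity

lemma summable_g10 : Summable g10 := by
  rw [← summable_abs_iff]
  exact Summable.of_nonneg_of_le (fun p => abs_nonneg _) g10_abs_le summable_majorant

lemma summable_g11 : Summable g11 := by
  rw [← summable_abs_iff]
  exact Summable.of_nonneg_of_le (fun p => abs_nonneg _) g11_abs_le summable_majorant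

/-! ### The double sum evaluated along squares -/

lemma Dp_odd_row {m n : ℕ} (hm : ¬ 2 ∣ m) : Dp (m, n) = 0 := by
  rw [Dp, g10, g11, if_neg, if_neg, sub_zero]
  · rintro ⟨-, -, h, -⟩; exact hm h
  · rintro ⟨-, -, h, -⟩; exact hm h

lemma Dp_zero_of_le {m n : ℕ} (h : m ≤ n) : Dp (m, n) = 0 := by
  rw [Dp, g10, g11, if_neg, if_neg, sub_zero]
  · rintro ⟨h1, -⟩; omega
  · rintro ⟨h1, -⟩; omega

lemma Dp_zero_right (m : ℕ) : Dp (m, 0) = 0 := by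
  rw [Dp, g10, g11, if_neg, if_neg, sub_zero]
  · rintro ⟨-, h1, -⟩; omega
  · rintro ⟨-, h1, -⟩; omega

lemma Dp_even_eval (M b : ℕ) (hb : b < M) :
    Dp (2*M+2, 2*b+2)
      = (1/(2*(M:ℝ)+2) - 1/(2*(M:ℝ)+1)) * (1/(2*(b:ℝ)+2)) := by
  have c1 : (2*M+2 : ℕ) > 2*b+2 ∧ (2*b+2 : ℕ) > 0 ∧ 2 ∣ (2*M+2) ∧ 2 ∣ (2*b+2) :=
    ⟨by omega, by omega, ⟨M+1, by ring⟩, ⟨b+1, by ring⟩⟩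
  have c2 : ¬((2*M+2 : ℕ) > 2*b+2 ∧ (2*b+2 : ℕ) > 0 ∧ 2 ∣ (2*M+2) ∧ ¬ 2 ∣ (2*b+2)) := by
    rintro ⟨-, -, -, h⟩; exact h ⟨b+1, by ring⟩
  rw [Dp, g10, g11, if_pos c1, if_neg c2, sub_zero]
  push_cast
  ring_nf

lemma Dp_odd_eval (M b : ℕ) (hb : b < M + 1) :
    Dp (2*M+2, 2*b+1)
      = -((1/(2*(M:ℝ)+2) - 1/(2*(M:ℝ)+3)) * (1/(2*(b:ℝ)+1))) := by
  have c1 : ¬((2*M+2 : ℕ) > 2*b+1 ∧ (2*b+1 : ℕ) > 0 ∧ 2 ∣ (2*M+2) ∧ 2 ∣ (2*b+1)) := by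
    rintro ⟨-, -, -, h⟩; omega
  have c2 : (2*M+2 : ℕ) > 2*b+1 ∧ (2*b+1 : ℕ) > 0 ∧ 2 ∣ (2*M+2) ∧ ¬ 2 ∣ (2*b+1) :=
    ⟨by omega, by omega, ⟨M+1, by ring⟩, by omega⟩
  rw [Dp, g10, g11, if_neg c1, if_pos c2, zero_sub]
  push_cast
  ring_nf

lemma rowval (M : ℕ) :
    ∑ n ∈ Finset.range (2*M+2), Dp (2*M+2, n)
      = (1/(2*(M:ℝ)+2) - 1/(2*(M:ℝ)+1)) * Es M
        - (1/(2*(M:ℝ)+2) - 1/(2*(M:ℝ)+3)) * Os M := by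
  have h : (2*M+2 : ℕ) = 2*(M+1) := by ring
  rw [h, sum_range_parity]
  have h1 : ∑ b ∈ Finset.range (M+1), Dp (2*M+2, 2*b)
      = (1/(2*(M:ℝ)+2) - 1/(2*(M:ℝ)+1)) * Es M := by
    rw [Finset.sum_range_succ']
    have h0 : Dp (2*M+2, 2*0) = 0 := Dp_zero_right _
    rw [h0, add_zero, Es, Finset.mul_sum]
    apply Finset.sum_congr rfl
    intro b hb
    have hi : (2*(b+1) : ℕ) = 2*b+2 := by ring
    rw [hi, Dp_even_eval M b (Finset.mem_range.mp hb)]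
  have h2 : ∑ b ∈ Finset.range (M+1), Dp (2*M+2, 2*b+1)
      = -((1/(2*(M:ℝ)+2) - 1/(2*(M:ℝ)+3)) * Os M) := by
    rw [Os, Finset.mul_sum, ← Finset.sum_neg_distrib]
    apply Finset.sum_congr rfl
    intro b hb
    rw [Dp_odd_eval M b (Finset.mem_range.mp hb)]
  have h' : (2*(M+1) : ℕ) = 2*M+2 := by ring
  rw [h']
  rw [h1, h2]
  ring

lemma PQ (M : ℕ) : Ps (2*M+2) = Qs (2*M+2) + Es M / (2*(M:ℝ)+1) := by
  induction M with
  | zero =>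
      have hP : Ps 2 = 0 := by
        rw [Ps]
        rw [show (2:ℕ) = 1+1 from rfl, Finset.sum_range_succ, Finset.sum_range_succ]
        simp [Dp_zero_right]
      rw [hP, Qs]
      rw [show (2:ℕ) = 1+1 from rfl, Finset.sum_range_succ, Finset.sum_range_succ]
      simp [sps, aseq, Es, Finset.sum_range_succ]
  | succ M ih =>
      have e1 : (2*(M+1)+2 : ℕ) = (2*M+2+1)+1 := by ring
      have psps : Ps (2*(M+1)+2)
          = Ps (2*M+2) + (∑ n ∈ Finset.range (2*M+2), Dp (2*M+2, n)) := by
        rw [Ps, e1, Finset.sum_range_succ, Finset.sum_range_succ, ← Ps]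
        have hodd : ∑ n ∈ Finset.range (2*M+2+1), Dp (2*M+2+1, n) = 0 :=
          Finset.sum_eq_zero fun n _ => Dp_odd_row (by omega)
        rw [hodd, add_zero]
      have qsqs : Qs (2*(M+1)+2)
          = Qs (2*M+2) + aseq (2*M+2) * sps (2*M+2)
            + aseq (2*M+2+1) * (sps (2*M+2) + aseq (2*M+2)) := by
        rw [Qs, e1, Finset.sum_range_succ, Finset.sum_range_succ, ← Qs]
        rw [show sps (2*M+2+1) = sps (2*M+2) + aseq (2*M+2) by
          rw [sps, Finset.sum_range_succ, ← sps]]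
      have ha1 : aseq (2*M+2) = 1/(2*(M:ℝ)+2) := by
        rw [show (2*M+2 : ℕ) = 2*(M+1) by ring, aseq_even]
        push_cast; ring_nf
      have ha2 : aseq (2*M+2+1) = -(1/(2*(M:ℝ)+3)) := by
        rw [show (2*M+2+1 : ℕ) = 2*(M+1)+1 by ring, aseq_odd]
        push_cast; ring_nf
      have hEs : Es (M+1) = Es M + 1/(2*(M:ℝ)+2) := by
        rw [Es, Finset.sum_range_succ, ← Es]
      rw [psps, rowval, ih, qsqs, ha1, ha2, sps_even, hEs]
      have d1 : (2*(M:ℝ)+1) ≠ 0 := by positivity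
      have d2 : (2*(M:ℝ)+2) ≠ 0 := by positivity
      have d3 : (2*(M:ℝ)+3) ≠ 0 := by positivity
      have d4 : (2*((M:ℝ)+1)+1) = 2*(M:ℝ)+3 := by ring
      push_cast
      rw [d4]
      field_simp
      ring

/-! ### Limits -/

lemma hsps : Tendsto (fun M : ℕ => sps (2*M+2)) atTop (𝓝 (-Real.log 2)) := by
  refine hlog.neg.congr fun M => ?_
  rw [sps_even, EsubO]
  ring

lemma tendsto_two_mul_add_two : Tendsto (fun M : ℕ => 2*M+2) atTop atTop :=
  tendsto_atTop_mono (fun n => by simp [id]; omega) tendsto_id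

lemma hT : Tendsto (fun M : ℕ => ∑ k ∈ Finset.range (2*M+2), 1/(k:ℝ)^2)
    atTop (𝓝 (Real.pi^2/6)) :=
  (hasSum_zeta_two.tendsto_sum_nat).comp tendsto_two_mul_add_two

lemma hQlim : Tendsto (fun M : ℕ => Qs (2*M+2)) atTop
    (𝓝 ((Real.log 2 ^ 2 - Real.pi^2/6)/2)) := by
  have h1 : Tendsto (fun M : ℕ => sps (2*M+2)^2) atTop (𝓝 (Real.log 2 ^ 2)) := by
    have := hsps.pow 2
    simpa using this
  have h2 := (h1.sub hT).div_const 2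
  refine h2.congr fun M => ?_
  have := sq_sum (2*M+2)
  linarith

lemma hPlim : Tendsto (fun M : ℕ => Ps (2*M+2)) atTop
    (𝓝 ((Real.log 2 ^ 2 - Real.pi^2/6)/2)) := by
  have hc' : Tendsto (fun M : ℕ => Es M / (2*(M:ℝ)+1)) atTop (𝓝 0) := by
    refine hc.congr fun M => ?_
    rw [Es_harmonic]
  have h := hQlim.add hc'
  rw [add_zero] at h
  exact h.congr fun M => (PQ M).symm

lemma sumF (N : ℕ) :
    ∑ p ∈ Finset.range N ×ˢ Finset.range N, Dp p = Ps N := by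
  rw [Finset.sum_product, Ps]
  apply Finset.sum_congr rfl
  intro m hm
  symm
  apply Finset.sum_subset (Finset.range_subset_range.mpr (le_of_lt (Finset.mem_range.mp hm)))
  intro n _ hn
  exact Dp_zero_of_le (by simpa using Finset.mem_range.not.mp hn)

lemma hF : Tendsto (fun M : ℕ => Finset.range (2*M+2) ×ˢ Finset.range (2*M+2))
    atTop atTop := by
  apply tendsto_atTop_finset_of_monotone
  · intro i j hij
    apply Finset.product_subset_product <;>
      exact Finset.range_subset_range.mpr (by omega)
  · intro p
    refine ⟨max p.1 p.2, ?_⟩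
    rw [Finset.mem_product, Finset.mem_range, Finset.mem_range]
    omega

lemma tsum_Dp : ∑' p : ℕ × ℕ, Dp p = (Real.log 2 ^ 2 - Real.pi^2/6)/2 := by
  have hsumm : Summable Dp := summable_g10.sub summable_g11
  have h1 : Tendsto (fun M : ℕ =>
      ∑ p ∈ Finset.range (2*M+2) ×ˢ Finset.range (2*M+2), Dp p)
      atTop (𝓝 (∑' p : ℕ × ℕ, Dp p)) := hsumm.hasSum.comp hF
  have h2 : Tendsto (fun M : ℕ =>
      ∑ p ∈ Finset.range (2*M+2) ×ˢ Finset.range (2*M+2), Dp p)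
      atTop (𝓝 ((Real.log 2 ^ 2 - Real.pi^2/6)/2)) := by
    refine hPlim.congr fun M => ?_
    rw [sumF]
  exact tendsto_nhds_unique h1 h2

/-! ### `Gamma1` -/

lemma gpart (N : ℕ) :
    ∑ k ∈ Finset.range N, (1 / (2 * ((k : ℝ) + 1)) - 1 / (2 * ((k : ℝ) + 1) + 1))
      = 1 + sps (2*N+2) := by
  induction N with
  | zero =>
      rw [Finset.sum_range_zero, sps_even]
      simp [Es, Os]
  | succ k ih =>
      rw [Finset.sum_range_succ, ih, sps_even, sps_even]
      have hE : Es (k+1) = Es k + 1/(2*(k:ℝ)+2) := by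
        rw [Es, Finset.sum_range_succ, ← Es]
      have hO : Os (k+1) = Os k + 1/(2*((k:ℝ)+1)+1) := by
        rw [Os, Finset.sum_range_succ, ← Os]
        push_cast
        ring_nf
      rw [hE, hO]
      push_cast
      ring

lemma summable_gamma_terms :
    Summable (fun n : ℕ => 1 / (2 * ((n : ℝ) + 1)) - 1 / (2 * ((n : ℝ) + 1) + 1)) := by
  have hz : Summable (fun n : ℕ => 1/((n:ℝ)+1)^2) := by
    have := (summable_nat_add_iff (f := fun n : ℕ => 1/(n:ℝ)^2) 1).mpr hasSum_zeta_two.summable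
    refine this.congr fun n => ?_
    push_cast
    ring
  refine Summable.of_nonneg_of_le (fun n => ?_) (fun n => ?_) hz
  · have h1 : (0:ℝ) < 2*((n:ℝ)+1) := by positivity
    have h2 : (0:ℝ) < 2*((n:ℝ)+1)+1 := by positivity
    have := one_div_le_one_div_of_le h1 (by linarith : 2*((n:ℝ)+1) ≤ 2*((n:ℝ)+1)+1)
    linarith
  · have h1 : (0:ℝ) < 2*((n:ℝ)+1) := by positivity
    have h2 : (0:ℝ) < 2*((n:ℝ)+1)+1 := by positivity
    have hval : 1 / (2 * ((n : ℝ) + 1)) - 1 / (2 * ((n : ℝ) + 1) + 1)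
        = 1/((2*((n:ℝ)+1)) * (2*((n:ℝ)+1)+1)) := by
      field_simp
      try ring
    rw [hval]
    apply one_div_le_one_div_of_le (by positivity)
    nlinarith [sq_nonneg ((n:ℝ)+1)]

lemma gamma1_eq : Gamma1 = -Real.log 2 := by
  have hts : ∑' n : ℕ, (1 / (2 * ((n : ℝ) + 1)) - 1 / (2 * ((n : ℝ) + 1) + 1))
      = 1 - Real.log 2 := by
    have h1 := summable_gamma_terms.hasSum.tendsto_sum_nat
    have h2 : Tendsto (fun N : ℕ =>
        ∑ k ∈ Finset.range N, (1 / (2 * ((k : ℝ) + 1)) - 1 / (2 * ((k : ℝ) + 1) + 1)))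
        atTop (𝓝 (1 - Real.log 2)) := by
      have h3 : Tendsto (fun N : ℕ => 1 + sps (2*N+2)) atTop (𝓝 (1 + -Real.log 2)) :=
        tendsto_const_nhds.add hsps
      rw [show (1 + -Real.log 2) = 1 - Real.log 2 by ring] at h3
      exact h3.congr fun N => (gpart N).symm
    exact tendsto_nhds_unique h1 h2
  rw [Gamma1, hts]
  ring

end Aux

theorem stmt_18 :
    Summable g10 ∧ Summable g11 ∧
    Gamma1 = -Real.log 2 ∧
    Gamma1 ^ 2 + 2 * (∑' p : ℕ × ℕ, g11 p) - 2 * (∑' p : ℕ × ℕ, g10 p) = Real.pi ^ 2 / 6 := by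
  refine ⟨summable_g10, summable_g11, gamma1_eq, ?_⟩
  have hD : (∑' p : ℕ × ℕ, g10 p) - (∑' p : ℕ × ℕ, g11 p)
      = (Real.log 2 ^ 2 - Real.pi^2/6)/2 := by
    rw [← Summable.tsum_sub summable_g10 summable_g11]
    exact tsum_Dp
  rw [gamma1_eq]
  nlinarith [hD]

end
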